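/- Let (G_n, f_n) be an inverse sequence of countable abelian groups indexed by ℕ. Then (G_n) satisfies the Mittag-Leffler condition if and only if the derived limit lim¹ G_n is the zero group. -/
import Mathlib


/-- The composite bonding map `f_{n,m} : G m →+ G n` for `n ≤ m`, namely
`f n ∘ f (n+1) ∘ ⋯ ∘ f (m-1)` (with `f_{n,n} = id`). -/
def fnm (G : ℕ → Type*) [∀ n, AddCommGroup (G n)] (f : ∀ n, G (n + 1) →+ G n)
    (n m : ℕ) (h : n ≤ m) : G m →+ G n :=
  Nat.leRecOn h (fun {k} (g : G k →+ G n) => g.comp (f k)) (AddMonoidHom.id (G n))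

/-- The map `Δ : ∏ G n → ∏ G n` defined by `Δ(x)_n = x_n - f_n (x_{n+1})`; its kernel is the
inverse limit `lim G n` and its cokernel is the derived limit `lim¹ G n`. -/
def delta (G : ℕ → Type*) [∀ n, AddCommGroup (G n)] (f : ∀ n, G (n + 1) →+ G n) :
    (∀ n, G n) →+ (∀ n, G n) where
  toFun x := fun n => x n - f n (x (n + 1))
  map_zero' := by
    funext n
    show (0 : G n) - f n 0 = 0
    rw [map_zero, sub_zero]
  map_add' := by
    intro a b
    funext n
    show (a n + b n) - f n (a (n + 1) + b (n + 1)) =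
      (a n - f n (a (n + 1))) + (b n - f n (b (n + 1)))
    rw [map_add]
    abel

section lemmas
variable (G : ℕ → Type*) [∀ n, AddCommGroup (G n)] (f : ∀ n, G (n + 1) →+ G n)

theorem fnm_self (n : ℕ) : fnm G f n n le_rfl = AddMonoidHom.id (G n) :=
  Nat.leRecOn_self _

theorem fnm_succ (n m : ℕ) (h : n ≤ m) :
    fnm G f n (m + 1) (h.trans (Nat.le_succ m)) = (fnm G f n m h).comp (f m) :=
  Nat.leRecOn_succ h _

theorem fnm_comp (n m k : ℕ) (h1 : n ≤ m) (h2 : m ≤ k) :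
    fnm G f n k (h1.trans h2) = (fnm G f n m h1).comp (fnm G f m k h2) := by
  induction k, h2 using Nat.le_induction with
  | base => rw [fnm_self]; rfl
  | succ k h2 ih =>
      rw [fnm_succ G f n k (h1.trans h2), fnm_succ G f m k h2, ih]
      rfl

theorem fnm_succ_left (n m : ℕ) (h : n + 1 ≤ m) (x : G m) :
    fnm G f n m ((Nat.le_succ n).trans h) x = f n (fnm G f (n + 1) m h x) := by
  rw [fnm_comp G f n (n + 1) m (Nat.le_succ n) h]
  have : fnm G f n (n + 1) (Nat.le_succ n) = f n := by
    have := fnm_succ G f n n le_rfl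
    rw [fnm_self] at this
    simpa using this
  simp [this]

theorem fnm_range_mono (n m k : ℕ) (h1 : n ≤ m) (h2 : m ≤ k) :
    (fnm G f n k (h1.trans h2)).range ≤ (fnm G f n m h1).range := by
  rw [fnm_comp G f n m k h1 h2]
  rintro x ⟨y, rfl⟩
  exact ⟨_, rfl⟩

/-- partial sums `∑_{j=n}^{m-1} f_{n,j}(x_j)` -/
def psum (x : ∀ n, G n) (n m : ℕ) : G n :=
  ∑ j ∈ Finset.Ico n m, if h : n ≤ j then fnm G f n j h (x j) else 0

theorem psum_self (x : ∀ n, G n) (n : ℕ) : psum G f x n n = 0 := by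
  simp [psum]

theorem psum_succ (x : ∀ n, G n) (n m : ℕ) (h : n ≤ m) :
    psum G f x n (m + 1) = psum G f x n m + fnm G f n m h (x m) := by
  rw [psum, Finset.sum_Ico_succ_top h, dif_pos h]; rfl

theorem psum_split (x : ∀ n, G n) (n m m' : ℕ) (h1 : n ≤ m) (h2 : m ≤ m') :
    psum G f x n m' = psum G f x n m +
      ∑ j ∈ Finset.Ico m m', if h : n ≤ j then fnm G f n j h (x j) else 0 := by
  rw [psum, psum, Finset.sum_Ico_consecutive _ h1 h2]

theorem psum_shift (x : ∀ n, G n) (n m : ℕ) (h : n + 1 ≤ m) :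
    psum G f x n m = x n + f n (psum G f x (n + 1) m) := by
  induction m, h using Nat.le_induction with
  | base =>
      rw [psum_succ G f x n n le_rfl, psum_self, psum_self, fnm_self]
      simp
  | succ m h ih =>
      rw [psum_succ G f x n m ((Nat.le_succ n).trans h), psum_succ G f x (n + 1) m h, ih,
        fnm_succ_left G f n m h, map_add]
      abel

theorem telescope (x y : ∀ n, G n) (hy : ∀ n, y n - f n (y (n + 1)) = x n)
    (n M : ℕ) (h : n ≤ M) : y n = psum G f x n M + fnm G f n M h (y M) := by
  induction M, h using Nat.le_induction with
  | base => rw [psum_self, fnm_self]; simp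
  | succ M h ih =>
      rw [psum_succ G f x n M h, fnm_succ G f n M h, ih]
      have : y M = x M + f M (y (M + 1)) := by
        rw [← hy M]; abel
      rw [this, map_add, AddMonoidHom.comp_apply, add_assoc]

end lemmas

theorem forward_dir (G : ℕ → Type*) [∀ n, AddCommGroup (G n)] (f : ∀ n, G (n + 1) →+ G n)
    (ML : ∀ n : ℕ, ∃ m : ℕ, ∃ hm : n ≤ m, ∀ k : ℕ, ∀ hk : m ≤ k,
        (fnm G f n k (hm.trans hk)).range = (fnm G f n m hm).range) :
    Function.Surjective (delta G f) := by
  classical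
  -- stable indices can be chosen arbitrarily large
  have key : ∀ n b : ℕ, ∃ m, (b ≤ m ∧ n ≤ m) ∧ ∀ (h : n ≤ m), ∀ k, ∀ hk : m ≤ k,
      (fnm G f n k (h.trans hk)).range = (fnm G f n m h).range := by
    intro n b
    obtain ⟨m, hm, hst⟩ := ML n
    refine ⟨max m b, ⟨le_max_right _ _, hm.trans (le_max_left _ _)⟩, ?_⟩
    intro h k hk
    have h1 : m ≤ max m b := le_max_left _ _
    have h2 : max m b ≤ k := hk
    rw [hst k (h1.trans h2), hst (max m b) h1]
  choose M₀ hM₀ using key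
  set M : ℕ → ℕ := fun n => Nat.rec (M₀ 0 1) (fun n Mn => M₀ (n + 1) (max Mn (n + 2))) n with hM
  have hM0 : M 0 = M₀ 0 1 := rfl
  have hMs : ∀ n, M (n + 1) = M₀ (n + 1) (max (M n) (n + 2)) := fun n => rfl
  have hM1 : ∀ n, n + 1 ≤ M n := by
    intro n
    cases n with
    | zero => exact (hM₀ 0 1).1.1
    | succ n =>
        have := (hM₀ (n + 1) (max (M n) (n + 2))).1.1
        rw [← hMs n] at this
        exact le_trans (le_max_right _ _) this
  have hMle : ∀ n, n ≤ M n := fun n => (Nat.le_succ n).trans (hM1 n)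
  have hmono : ∀ n, M n ≤ M (n + 1) := by
    intro n
    have := (hM₀ (n + 1) (max (M n) (n + 2))).1.1
    rw [← hMs n] at this
    exact le_trans (le_max_left _ _) this
  have hstab : ∀ n k, ∀ hk : M n ≤ k,
      (fnm G f n k ((hMle n).trans hk)).range = (fnm G f n (M n) (hMle n)).range := by
    intro n k hk
    cases n with
    | zero => exact (hM₀ 0 1).2 (hMle 0) k hk
    | succ n =>
        have := (hM₀ (n + 1) (max (M n) (n + 2))).2
        rw [← hMs n] at this
        exact this (hMle (n + 1)) k hk
  set H : ∀ n, AddSubgroup (G n) := fun n => (fnm G f n (M n) (hMle n)).range with hH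
  have hmem : ∀ n j, ∀ hj : M n ≤ j, ∀ g : G j, fnm G f n j ((hMle n).trans hj) g ∈ H n := by
    intro n j hj g
    show fnm G f n j ((hMle n).trans hj) g ∈ (fnm G f n (M n) (hMle n)).range
    rw [← hstab n j hj]
    exact ⟨g, rfl⟩
  have hsurj : ∀ n (h : G n), h ∈ H n → ∃ h' : G (n + 1), h' ∈ H (n + 1) ∧ f n h' = h := by
    intro n h hh
    set k := max (M n) (M (n + 1)) with hk
    have hk1 : M n ≤ k := le_max_left _ _
    have hk2 : M (n + 1) ≤ k := le_max_right _ _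
    have hk3 : n + 1 ≤ k := ((Nat.le_succ (n + 1)).trans (hM1 (n + 1))).trans hk2
    have hh' : h ∈ (fnm G f n (M n) (hMle n)).range := hh
    rw [← hstab n k hk1] at hh'
    obtain ⟨g, rfl⟩ := hh'
    refine ⟨fnm G f (n + 1) k hk3 g, hmem (n + 1) k hk2 g, ?_⟩
    rw [← fnm_succ_left G f n k hk3 g]
  choose s hs1 hs2 using hsurj
  intro x
  set y : ∀ n, G n := fun n => psum G f x n (M n) with hy
  set d : ∀ n, G n := fun n => y n - f n (y (n + 1)) - x n with hdd
  have hd : ∀ n, d n ∈ H n := by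
    intro n
    have e1 : psum G f x n (M (n + 1)) = x n + f n (psum G f x (n + 1) (M (n + 1))) :=
      psum_shift G f x n (M (n + 1)) (hM1 n |>.trans (hmono n))
    have e2 := psum_split G f x n (M n) (M (n + 1)) (hMle n) (hmono n)
    have : d n = psum G f x n (M n) - psum G f x n (M (n + 1)) := by
      rw [hdd]; simp only; rw [hy]; simp only; rw [e1]; abel
    rw [this, e2]
    have : psum G f x n (M n) - (psum G f x n (M n) +
        ∑ j ∈ Finset.Ico (M n) (M (n + 1)), if h : n ≤ j then fnm G f n j h (x j) else 0) =
        -∑ j ∈ Finset.Ico (M n) (M (n + 1)), (if h : n ≤ j then fnm G f n j h (x j) else 0) := by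
      abel
    rw [this]
    refine neg_mem (AddSubgroup.sum_mem _ ?_)
    intro j hj
    rw [Finset.mem_Ico] at hj
    have h1 : M n ≤ j := hj.1
    rw [dif_pos ((hMle n).trans h1)]
    exact hmem n j h1 (x j)
  set z : ∀ n, {g : G n // g ∈ H n} := fun n =>
    Nat.rec ⟨0, zero_mem _⟩ (fun n zn => ⟨s n (zn.1 + d n) (add_mem zn.2 (hd n)),
      hs1 n (zn.1 + d n) (add_mem zn.2 (hd n))⟩) n with hz
  have hzeq : ∀ n, f n (z (n + 1)).1 = (z n).1 + d n := by
    intro n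
    exact hs2 n ((z n).1 + d n) (add_mem (z n).2 (hd n))
  refine ⟨fun n => y n + (z n).1, ?_⟩
  funext n
  show (y n + (z n).1) - f n (y (n + 1) + (z (n + 1)).1) = x n
  rw [map_add, hzeq n, hdd]
  simp only
  abel

theorem backward_dir (G : ℕ → Type*) [∀ n, AddCommGroup (G n)] [∀ n, Countable (G n)]
    (f : ∀ n, G (n + 1) →+ G n) (hsur : Function.Surjective (delta G f)) :
    ∀ n : ℕ, ∃ m : ℕ, ∃ hm : n ≤ m, ∀ k : ℕ, ∀ hk : m ≤ k,
        (fnm G f n k (hm.trans hk)).range = (fnm G f n m hm).range := by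
  classical
  by_contra hnot
  push_neg at hnot
  obtain ⟨n₀, hn₀⟩ := hnot
  -- hn₀ : ∀ m (hm : n₀ ≤ m), ∃ k hk, range (fnm n₀ k) ≠ range (fnm n₀ m)
  have step : ∀ m (hm : n₀ ≤ m), ∃ k, ∃ hk : m ≤ k,
      (fnm G f n₀ k (hm.trans hk)).range < (fnm G f n₀ m hm).range := by
    intro m hm
    obtain ⟨k, hk, hne⟩ := hn₀ m hm
    exact ⟨k, hk, lt_of_le_of_ne (fnm_range_mono G f n₀ m k hm hk) hne⟩
  choose st hst1 hst2 using step
  set m : ℕ → {p : ℕ // n₀ ≤ p} := fun k =>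
    Nat.rec ⟨n₀, le_rfl⟩ (fun _ mk => ⟨st mk.1 mk.2, mk.2.trans (hst1 mk.1 mk.2)⟩) k with hm
  set I : ℕ → AddSubgroup (G n₀) := fun k => (fnm G f n₀ (m k).1 (m k).2).range with hI
  have hIlt : ∀ k, I (k + 1) < I k := fun k => hst2 (m k).1 (m k).2
  have hImono : ∀ {k K}, k ≤ K → I K ≤ I k :=
    fun {k K} h => antitone_nat_of_succ_le (fun k => le_of_lt (hIlt k)) h
  have hcongr : ∀ j (hj : n₀ ≤ j) j' (hj' : n₀ ≤ j'), j = j' →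
      (fnm G f n₀ j hj).range = (fnm G f n₀ j' hj').range := by
    rintro j hj j' hj' rfl; rfl
  have hmlt : ∀ k, (m k).1 < (m (k + 1)).1 := by
    intro k
    refine lt_of_le_of_ne (hst1 (m k).1 (m k).2) fun he => ?_
    have heq : I (k + 1) = I k := hcongr _ (m (k + 1)).2 _ (m k).2 he.symm
    exact (hIlt k).ne heq
  have mstrict : StrictMono (fun k => (m k).1) := strictMono_nat_of_lt_succ hmlt
  have hm0 : (m 0).1 = n₀ := rfl
  -- enumeration of G n₀
  obtain ⟨a, ha⟩ := exists_surjective_nat (G n₀)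
  -- diagonal choice of g's
  have gchoice : ∀ k (S : G n₀), ∃ g, g ∈ I k ∧ a k - (S + g) ∉ I (k + 1) := by
    intro k S
    by_cases hc : a k - S ∈ I k
    · by_contra hall
      push_neg at hall
      obtain ⟨u, hu1, hu2⟩ := SetLike.exists_of_lt (hIlt k)
      have hmem : a k - S - u ∈ I k := sub_mem hc hu1
      have := hall _ hmem
      have he : a k - (S + (a k - S - u)) = u := by abel
      rw [he] at this
      exact hu2 this
    · refine ⟨0, zero_mem _, fun hmem => hc ?_⟩
      rw [add_zero] at hmem
      exact hImono (Nat.le_succ k) hmem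
  choose gg hg1 hg2 using gchoice
  set S : ℕ → G n₀ := fun K => Nat.rec 0 (fun k Sk => Sk + gg k Sk) K with hS
  have hSsucc : ∀ k, S (k + 1) = S k + gg k (S k) := fun k => rfl
  have hgmem : ∀ k, gg k (S k) ∈ I k := fun k => hg1 k (S k)
  have hnotin : ∀ k, a k - S (k + 1) ∉ I (k + 1) := fun k => hg2 k (S k)
  -- lifts
  have hlift : ∀ k, ∃ v : G ((m k).1), fnm G f n₀ (m k).1 (m k).2 v = gg k (S k) :=
    fun k => hgmem k
  choose h hliftspec using hlift
  -- the element x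
  set x : ∀ j, G j := fun j =>
    if hj : ∃ k, (m k).1 = j then cast (congrArg G hj.choose_spec) (h hj.choose) else 0 with hx
  have hcast : ∀ k' k'' (e : (m k').1 = (m k'').1), cast (congrArg G e) (h k') = h k'' := by
    intro k' k'' e
    obtain rfl : k' = k'' := mstrict.injective e
    rw [cast_eq]
  have hxval : ∀ k, x ((m k).1) = h k := by
    intro k
    have hex : ∃ k', (m k').1 = (m k).1 := ⟨k, rfl⟩
    rw [hx]
    simp only
    rw [dif_pos hex]
    exact hcast hex.choose k hex.choose_spec
  have hxzero : ∀ j, (¬∃ k, (m k).1 = j) → x j = 0 := by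
    intro j hj
    rw [hx]; simp only; rw [dif_neg hj]
  -- the purported preimage
  obtain ⟨y, hy⟩ := hsur x
  have hyn : ∀ n, y n - f n (y (n + 1)) = x n := fun n => congrFun hy n
  -- partial sums equal S
  have hSsum : ∀ K, S K = ∑ k ∈ Finset.range K, gg k (S k) := by
    intro K
    induction K with
    | zero => rfl
    | succ K ih => rw [hSsucc, Finset.sum_range_succ, ih]
  have hpsum : ∀ K, psum G f x n₀ ((m K).1) = S K := by
    intro K
    have hsub : (Finset.range K).image (fun k => (m k).1) ⊆ Finset.Ico n₀ ((m K).1) := by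
      intro j hjmem
      rw [Finset.mem_image] at hjmem
      obtain ⟨k, hk, rfl⟩ := hjmem
      exact Finset.mem_Ico.mpr ⟨(m k).2, mstrict (Finset.mem_range.mp hk)⟩
    have hzero : ∀ j ∈ Finset.Ico n₀ ((m K).1),
        j ∉ (Finset.range K).image (fun k => (m k).1) →
        (if h : n₀ ≤ j then fnm G f n₀ j h (x j) else 0) = 0 := by
      intro j hjI hjni
      have hnoex : ¬∃ k, (m k).1 = j := by
        rintro ⟨k, rfl⟩
        rw [Finset.mem_Ico] at hjI
        have : k < K := mstrict.lt_iff_lt.mp hjI.2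
        exact hjni (Finset.mem_image.mpr ⟨k, Finset.mem_range.mpr this, rfl⟩)
      rw [hxzero j hnoex]
      split <;> simp
    rw [psum, hSsum]
    calc (∑ j ∈ Finset.Ico n₀ ((m K).1), if h : n₀ ≤ j then fnm G f n₀ j h (x j) else 0)
        = ∑ j ∈ (Finset.range K).image (fun k => (m k).1),
            if h : n₀ ≤ j then fnm G f n₀ j h (x j) else 0 :=
          (Finset.sum_subset hsub hzero).symm
      _ = ∑ k ∈ Finset.range K,
            if h : n₀ ≤ (m k).1 then fnm G f n₀ ((m k).1) h (x ((m k).1)) else 0 :=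
          Finset.sum_image (fun p _ q _ hpq => mstrict.injective hpq)
      _ = ∑ k ∈ Finset.range K, gg k (S k) := by
          apply Finset.sum_congr rfl
          intro k _
          rw [dif_pos (m k).2, hxval k, hliftspec k]
  -- contradiction
  obtain ⟨K, hK⟩ := ha (y n₀)
  have htel := telescope G f x y hyn n₀ ((m (K + 1)).1) (m (K + 1)).2
  rw [hpsum (K + 1)] at htel
  apply hnotin K
  rw [hK]
  have : y n₀ - S (K + 1) = fnm G f n₀ ((m (K + 1)).1) (m (K + 1)).2 (y ((m (K + 1)).1)) := by
    rw [htel]; abel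
  rw [this]
  exact ⟨_, rfl⟩

/-- Let `(G n, f n)` be an inverse sequence of countable abelian groups
indexed by `ℕ`.  Then `(G n)` satisfies the Mittag-Leffler condition (for each `n` there is
`m ≥ n` with `Im f_{n,m} = Im f_{n,k}` for all `k ≥ m`) if and only if the derived limit
`lim¹ G n` — the cokernel of `Δ`, i.e. the quotient `(∏ G n) ⧸ range Δ` — is the zero group. -/
theorem mittagLeffler_iff_lim1_eq_zero
    (G : ℕ → Type*) [∀ n, AddCommGroup (G n)] [∀ n, Countable (G n)]
    (f : ∀ n, G (n + 1) →+ G n) :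
    (∀ n : ℕ, ∃ m : ℕ, ∃ hm : n ≤ m, ∀ k : ℕ, ∀ hk : m ≤ k,
        (fnm G f n k (hm.trans hk)).range = (fnm G f n m hm).range) ↔
      Subsingleton ((∀ n, G n) ⧸ (delta G f).range) := by
  constructor
  · intro ML
    have hr : (delta G f).range = ⊤ :=
      AddMonoidHom.range_eq_top_of_surjective _ (forward_dir G f ML)
    rw [hr]
    exact QuotientAddGroup.subsingleton_quotient_top
  · intro hsub
    apply backward_dir G f
    intro v
    have h0 : ((v : (∀ n, G n) ⧸ (delta G f).range)) = 0 := Subsingleton.elim _ _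
    exact (QuotientAddGroup.eq_zero_iff v).mp h0
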